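/- Let λ ∈ ℂ ∖ Γ. Denote by ℒ(f) ∈ ℂ((z)) the Laurent expansion at 0 of a function f meromorphic at 0. Then ℂ((z)) is the internal direct sum of the ℂ-subspace ℂ[[z]] and the ℂ-linear span of { ℒ(e_{i,λ}) : i ∈ ℕ }: every formal Laurent series decomposes uniquely as g + Σ_{i=0}^{N} c_i ℒ(e_{i,λ}) with g ∈ ℂ[[z]] and c_i ∈ ℂ. -/

import Mathlib

open Filter Topology Metric

private lemma nat_coeffs_zero {ρ : ℝ} (hρ : 0 < ρ) (b : ℕ → ℂ)
    (h : ∀ z : ℂ, z ≠ 0 → ‖z‖ < ρ → HasSum (fun k : ℕ => b k * z ^ k) 0) :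
    ∀ m, b m = 0 := by
  have ht : 0 < ρ / 2 := by linarith
  have hz0 : ((ρ / 2 : ℝ) : ℂ) ≠ 0 := by exact_mod_cast ht.ne'
  have hnz0 : ‖((ρ / 2 : ℝ) : ℂ)‖ = ρ / 2 := by
    rw [Complex.norm_real, Real.norm_eq_abs, abs_of_pos ht]
  have hsum0 : Summable (fun k => b k * ((ρ/2 : ℝ) : ℂ) ^ k) :=
    (h _ hz0 (by rw [hnz0]; linarith)).summable
  have hsumn : Summable (fun k => ‖b k‖ * (ρ/2) ^ k) := by
    refine (summable_norm_iff.mpr hsum0).congr fun k => ?_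
    rw [norm_mul, norm_pow, hnz0]
  intro m
  induction m using Nat.strong_induction_on with
  | _ m IH =>
  have S1 : Summable (fun j => ‖b (j + (m+1))‖ * (ρ/2) ^ (j + (m+1))) :=
    (summable_nat_add_iff (f := fun k => ‖b k‖ * (ρ/2) ^ k) (m+1)).mpr hsumn
  have S2 : Summable (fun j => ‖b (j + (m+1))‖ * (ρ/2) ^ j) := by
    refine (S1.mul_right ((ρ/2) ^ (m+1))⁻¹).congr fun j => ?_
    rw [pow_add]
    field_simp
  set C := ∑' j, ‖b (j + (m+1))‖ * (ρ/2) ^ j with hCdef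
  have hC0 : 0 ≤ C := tsum_nonneg fun j => mul_nonneg (norm_nonneg _) (pow_nonneg ht.le _)
  have key : ∀ z : ℂ, z ≠ 0 → ‖z‖ < ρ/2 → ‖b m‖ ≤ C * ‖z‖ := by
    intro z hz hzt
    have hs := h z hz (by linarith)
    have htail : HasSum (fun j => b (j + (m+1)) * z ^ (j + (m+1)))
        (0 - ∑ k ∈ Finset.range (m+1), b k * z ^ k) :=
      (hasSum_nat_add_iff' (f := fun k => b k * z ^ k) (m+1)).mpr hs
    have hhead : ∑ k ∈ Finset.range (m+1), b k * z ^ k = b m * z ^ m := by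
      refine Finset.sum_eq_single_of_mem m (Finset.self_mem_range_succ m) fun k hk hkm => ?_
      rw [IH k (lt_of_le_of_ne (Nat.lt_succ_iff.mp (Finset.mem_range.mp hk)) hkm), zero_mul]
    rw [hhead, zero_sub] at htail
    have hts : Summable (fun j => ‖b (j + (m+1)) * z ^ (j + (m+1))‖) :=
      summable_norm_iff.mpr htail.summable
    have hbound : ∀ j, ‖b (j + (m+1)) * z ^ (j + (m+1))‖
        ≤ (‖b (j + (m+1))‖ * (ρ/2) ^ j) * ‖z‖ ^ (m+1) := by
      intro j
      rw [norm_mul, norm_pow, pow_add, ← mul_assoc]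
      have h1 : ‖z‖ ^ j ≤ (ρ/2) ^ j := pow_le_pow_left₀ (norm_nonneg z) hzt.le j
      have := mul_le_mul_of_nonneg_right h1 (norm_nonneg (b (j + (m+1))))
      calc ‖b (j + (m+1))‖ * ‖z‖ ^ j * ‖z‖ ^ (m+1)
          ≤ ‖b (j + (m+1))‖ * (ρ/2) ^ j * ‖z‖ ^ (m+1) := by
            gcongr
        _ = _ := rfl
    have hnorm : ‖b m * z ^ m‖ ≤ C * ‖z‖ ^ (m+1) := by
      have h1 : ‖b m * z ^ m‖ = ‖∑' j, b (j + (m+1)) * z ^ (j + (m+1))‖ := by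
        rw [htail.tsum_eq, norm_neg]
      rw [h1]
      calc ‖∑' j, b (j + (m+1)) * z ^ (j + (m+1))‖
          ≤ ∑' j, ‖b (j + (m+1)) * z ^ (j + (m+1))‖ := norm_tsum_le_tsum_norm hts
        _ ≤ ∑' j, (‖b (j + (m+1))‖ * (ρ/2) ^ j) * ‖z‖ ^ (m+1) :=
            Summable.tsum_le_tsum hbound hts (S2.mul_right _)
        _ = C * ‖z‖ ^ (m+1) := by rw [S2.tsum_mul_right]
    have hzm : 0 < ‖z‖ ^ m := pow_pos (norm_pos_iff.mpr hz) m
    rw [norm_mul, norm_pow] at hnorm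
    have : ‖b m‖ * ‖z‖ ^ m ≤ (C * ‖z‖) * ‖z‖ ^ m := by
      calc ‖b m‖ * ‖z‖ ^ m ≤ C * ‖z‖ ^ (m+1) := hnorm
        _ = (C * ‖z‖) * ‖z‖ ^ m := by ring
    exact le_of_mul_le_mul_right this hzm
  by_contra hbm
  have hbp : 0 < ‖b m‖ := norm_pos_iff.mpr hbm
  set s := min (ρ/4) (‖b m‖ / (2 * (C + 1))) with hsdef
  have hs0 : 0 < s := lt_min (by linarith) (by positivity)
  have hslt : s < ρ/2 := lt_of_le_of_lt (min_le_left _ _) (by linarith)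
  have hzs : ((s : ℝ) : ℂ) ≠ 0 := by exact_mod_cast hs0.ne'
  have hns : ‖((s : ℝ) : ℂ)‖ = s := by
    rw [Complex.norm_real, Real.norm_eq_abs, abs_of_pos hs0]
  have := key _ hzs (by rw [hns]; exact hslt)
  rw [hns] at this
  have hs2 : s ≤ ‖b m‖ / (2 * (C + 1)) := min_le_right _ _
  have h3 : C * s ≤ C * (‖b m‖ / (2 * (C + 1))) := mul_le_mul_of_nonneg_left hs2 hC0
  have h5 : C / (2 * (C + 1)) < 1 := by
    rw [div_lt_one (by positivity)]; linarith
  have h4 : C * (‖b m‖ / (2 * (C + 1))) < ‖b m‖ := by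
    have := mul_lt_mul_of_pos_right h5 hbp
    rw [one_mul] at this
    calc C * (‖b m‖ / (2 * (C + 1))) = C / (2 * (C + 1)) * ‖b m‖ := by ring
      _ < ‖b m‖ := this
  linarith

private lemma int_coeffs_zero {a : ℤ → ℂ} {D : ℤ} (hD : ∀ n < D, a n = 0) {ρ : ℝ} (hρ : 0 < ρ)
    (h : ∀ z : ℂ, z ≠ 0 → ‖z‖ < ρ → HasSum (fun n : ℤ => a n * z ^ n) 0) :
    ∀ n, a n = 0 := by
  have hb : ∀ k : ℕ, a (D + k) = 0 := by
    refine nat_coeffs_zero hρ _ fun z hz hzρ => ?_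
    have h0 := h z hz hzρ
    have hinj : Function.Injective (fun k : ℕ => D + (k : ℤ)) := fun k₁ k₂ hk => by
      simpa using hk
    have hoff : ∀ n : ℤ, n ∉ Set.range (fun k : ℕ => D + (k : ℤ)) → a n * z ^ n = 0 := by
      intro n hn
      have hnD : n < D := by
        by_contra hc
        exact hn ⟨(n - D).toNat, show D + (((n - D).toNat : ℕ) : ℤ) = n by omega⟩
      rw [hD n hnD, zero_mul]
    have h1 : HasSum (fun k : ℕ => a (D + k) * z ^ (D + (k : ℤ))) 0 :=
      (hinj.hasSum_iff hoff).mpr h0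
    have h2 := h1.mul_left (z ^ (-D))
    rw [mul_zero] at h2
    refine h2.congr_fun fun k => ?_
    rw [zpow_add₀ hz, zpow_natCast]
    field_simp [zpow_ne_zero _ hz]
    rw [mul_assoc, ← zpow_add₀ hz, neg_add_cancel, zpow_zero, mul_one]
  intro n
  rcases lt_or_ge n D with hn | hn
  · exact hD n hn
  · have : n = D + ((n - D).toNat : ℤ) := by omega
    rw [this]; exact hb _




open Complex

/-- The lattice `Γ = ℤ + τℤ` associated to `τ`. -/
def lattice (τ : ℂ) : Set ℂ := {z : ℂ | ∃ m n : ℤ, z = (m : ℂ) + (n : ℂ) * τ}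

/-- `e_{i,λ}(z) = (d/dz)^i (θ(λ+z)/θ(z))`. -/
noncomputable def eFun (θ : ℂ → ℂ) (lam : ℂ) (i : ℕ) : ℂ → ℂ :=
  iteratedDeriv i (fun z => θ (lam + z) / θ z)

/-- `F ∈ ℂ((z))` is the Laurent expansion at `0` of `f : ℂ → ℂ`:
the series `Σ F_n z^n` converges to `f z` on a punctured disc around `0`. -/
def IsLaurentExpansionAt (F : LaurentSeries ℂ) (f : ℂ → ℂ) : Prop :=
  ∃ ρ : ℝ, 0 < ρ ∧ ∀ z : ℂ, z ≠ 0 → ‖z‖ < ρ →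
    HasSum (fun n : ℤ => F.coeff n * z ^ n) (f z)

/-- `ℂ[[z]]` viewed as the subspace of `ℂ((z))` of series with no negative
coefficients. -/
noncomputable def powerSeriesSubspace : Submodule ℂ (LaurentSeries ℂ) where
  carrier := {F : LaurentSeries ℂ | ∀ n : ℤ, n < 0 → F.coeff n = 0}
  add_mem' := by
    intro a b ha hb n hn
    simp only [HahnSeries.coeff_add, ha n hn, hb n hn, add_zero]
  zero_mem' := by
    intro n hn
    simp
  smul_mem' := by
    intro c F hF n hn
    simp only [HahnSeries.coeff_smul, hF n hn, smul_zero]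


open Complex in
private lemma coeff_lemma (f : ℂ → ℂ) (G : LaurentSeries ℂ) (hG : IsLaurentExpansionAt G f)
    (g : ℂ → ℂ) (hg : AnalyticAt ℂ g 0) (c : ℂ) (m : ℤ) (hm : m < 0)
    (r : ℝ) (hr : 0 < r)
    (hdecomp : ∀ z ∈ Metric.ball (0:ℂ) r, z ≠ 0 → f z = c * z ^ m + g z) :
    G.coeff m = c ∧ ∀ n < m, G.coeff n = 0 := by
  obtain ⟨p, hp⟩ := hg
  have hps := hasFPowerSeriesAt_iff.mp hp
  rw [Metric.eventually_nhds_iff] at hps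
  obtain ⟨r', hr', hps⟩ := hps
  obtain ⟨ρ, hρ, hGsum⟩ := hG
  set ρ' := min ρ (min r r') with hρ'def
  have hρ'0 : 0 < ρ' := lt_min hρ (lt_min hr hr')
  set a : ℤ → ℂ := fun n =>
    G.coeff n - (if n = m then c else 0) - (if 0 ≤ n then p.coeff n.toNat else 0) with hadef
  have hsum : ∀ z : ℂ, z ≠ 0 → ‖z‖ < ρ' → HasSum (fun n : ℤ => a n * z ^ n) 0 := by
    intro z hz hzρ
    have hzr : z ∈ Metric.ball (0:ℂ) r := by
      rw [Metric.mem_ball, dist_zero_right]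
      exact lt_of_lt_of_le hzρ (le_trans (min_le_right _ _) (min_le_left _ _))
    have h1 : HasSum (fun n : ℤ => G.coeff n * z ^ n) (f z) :=
      hGsum z hz (lt_of_lt_of_le hzρ (min_le_left _ _))
    have h2 : HasSum (fun n : ℤ => (if n = m then c else 0) * z ^ n) (c * z ^ m) := by
      have := hasSum_ite_eq m (c * z ^ m)
      refine this.congr_fun fun n => ?_
      by_cases hn : n = m <;> simp [hn]
    have h3 : HasSum (fun n : ℤ => (if 0 ≤ n then p.coeff n.toNat else 0) * z ^ n) (g z) := by
      have hz' : dist z 0 < r' := by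
        rw [dist_zero_right]
        exact lt_of_lt_of_le hzρ (le_trans (min_le_right _ _) (min_le_right _ _))
      have hnat : HasSum (fun k : ℕ => z ^ k • p.coeff k) (g (0 + z)) := hps hz'
      rw [zero_add] at hnat
      have hinj : Function.Injective ((↑) : ℕ → ℤ) := fun a b hab => by exact_mod_cast hab
      have hoff : ∀ n : ℤ, n ∉ Set.range ((↑) : ℕ → ℤ) →
          (if 0 ≤ n then p.coeff n.toNat else 0) * z ^ n = 0 := by
        intro n hn
        have : ¬ (0 ≤ n) := fun hc => hn ⟨n.toNat, by omega⟩
        rw [if_neg this, zero_mul]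
      refine (hinj.hasSum_iff hoff).mp (hnat.congr_fun fun k => ?_)
      show (if (0:ℤ) ≤ (k:ℤ) then p.coeff ((k:ℤ)).toNat else 0) * z ^ ((k:ℤ))
        = z ^ (k:ℕ) • p.coeff k
      rw [if_pos (Int.natCast_nonneg k), Int.toNat_natCast, zpow_natCast, smul_eq_mul, mul_comm]
    have h4 := (h1.sub h2).sub h3
    rw [hdecomp z hzr hz] at h4
    have : c * z ^ m + g z - c * z ^ m - g z = 0 := by ring
    rw [this] at h4
    refine h4.congr_fun fun n => ?_
    simp only [hadef]
    ring
  have hDG : ∃ D : ℤ, ∀ n < D, G.coeff n = 0 := by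
    by_cases hG0 : G = 0
    · exact ⟨0, fun n _ => by simp [hG0]⟩
    · exact ⟨G.order, fun n hn => HahnSeries.coeff_eq_zero_of_lt_order hn⟩
  obtain ⟨D0, hD0⟩ := hDG
  have hzero : ∀ n, a n = 0 := by
    refine int_coeffs_zero (D := min D0 m) ?_ hρ'0 hsum
    intro n hn
    have h1 : n < D0 := lt_of_lt_of_le hn (min_le_left _ _)
    have h2 : n < m := lt_of_lt_of_le hn (min_le_right _ _)
    simp only [hadef, hD0 n h1, if_neg h2.ne, if_neg (by omega : ¬ (0:ℤ) ≤ n)]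
    ring
  constructor
  · have := hzero m
    rw [hadef] at this
    simp only [if_pos rfl, if_neg (by omega : ¬ (0:ℤ) ≤ m), sub_zero, sub_eq_zero] at this
    exact this
  · intro n hn
    have := hzero n
    simp only [hadef, if_neg hn.ne, if_neg (by omega : ¬ (0:ℤ) ≤ n)] at this
    linear_combination this

open Complex in
private lemma eFun_decomp (τ : ℂ) (θ : ℂ → ℂ)
    (hθ_entire : Differentiable ℂ θ)
    (hθ_deriv : deriv θ 0 = 1)
    (hθ_zero : ∀ z : ℂ, θ z = 0 ↔ z ∈ lattice τ)
    (lam : ℂ) (hlam : lam ∉ lattice τ) :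
    ∃ (ψ : ℂ → ℂ) (r : ℝ) (C : ℕ → ℂ), 0 < r ∧ (∀ i, C i ≠ 0) ∧
      (∀ i, AnalyticAt ℂ (iteratedDeriv i ψ) 0) ∧
      (∀ i, ∀ z ∈ Metric.ball (0:ℂ) r, z ≠ 0 →
        eFun θ lam i z = C i * z ^ (-1 - (i:ℤ)) + iteratedDeriv i ψ z) := by
  have hθ0 : θ 0 = 0 := (hθ_zero 0).mpr ⟨0, 0, by push_cast; ring⟩
  have hθlam : θ lam ≠ 0 := fun h => hlam ((hθ_zero lam).mp h)
  set u := dslope θ 0 with hudef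
  have hu : AnalyticAt ℂ u 0 := by
    obtain ⟨p, hp⟩ := hθ_entire.analyticAt 0
    exact ⟨p.fslope, hp.has_fpower_series_dslope_fslope⟩
  have hu0 : u 0 = 1 := by rw [hudef, dslope_same, hθ_deriv]
  have huθ : ∀ z : ℂ, z ≠ 0 → θ z = z * u z := by
    intro z hz
    rw [hudef, dslope_of_ne θ hz, slope_def_field, hθ0, sub_zero, sub_zero]
    field_simp
  set φ := fun z => θ (lam + z) / u z with hφdef
  have hnumdiff : Differentiable ℂ (fun z => θ (lam + z)) :=
    hθ_entire.comp ((differentiable_id).const_add lam)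
  have hφ : AnalyticAt ℂ φ 0 :=
    (hnumdiff.analyticAt 0).div hu (by rw [hu0]; exact one_ne_zero)
  have hφ0 : φ 0 = θ lam := by rw [hφdef]; simp [hu0]
  set ψ := dslope φ 0 with hψdef
  have hψ : AnalyticAt ℂ ψ 0 := by
    obtain ⟨p, hp⟩ := hφ
    exact ⟨p.fslope, hp.has_fpower_series_dslope_fslope⟩
  have hφψ : ∀ z : ℂ, z ≠ 0 → φ z = θ lam + z * ψ z := by
    intro z hz
    rw [hψdef, dslope_of_ne φ hz, slope_def_field, hφ0, sub_zero]
    field_simp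
    ring
  have hu_ne : ∀ᶠ z in nhds (0:ℂ), u z ≠ 0 :=
    hu.continuousAt.eventually_ne (by rw [hu0]; exact one_ne_zero)
  obtain ⟨r, hr, hball⟩ : ∃ r > 0, ∀ z ∈ Metric.ball (0:ℂ) r,
      u z ≠ 0 ∧ AnalyticAt ℂ ψ z := by
    have := hu_ne.and hψ.eventually_analyticAt
    rw [Metric.eventually_nhds_iff] at this
    obtain ⟨ε, hε, hthis⟩ := this
    exact ⟨ε, hε, fun z hz => hthis (by rwa [Metric.mem_ball] at hz)⟩
  have hψball : AnalyticOnNhd ℂ ψ (Metric.ball (0:ℂ) r) := fun z hz => (hball z hz).2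
  have hgan : ∀ i, AnalyticOnNhd ℂ (iteratedDeriv i ψ) (Metric.ball (0:ℂ) r) := by
    intro i
    induction i with
    | zero => simpa [iteratedDeriv_zero] using hψball
    | succ i ih => rw [iteratedDeriv_succ]; exact ih.deriv
  have hrepr : ∀ z ∈ Metric.ball (0:ℂ) r, z ≠ 0 →
      θ (lam + z) / θ z = θ lam * z⁻¹ + ψ z := by
    intro z hz hz0
    have huz := (hball z hz).1
    rw [huθ z hz0]
    have h1 : θ (lam + z) / (z * u z) = φ z / z := by
      show θ (lam + z) / (z * u z) = θ (lam + z) / u z / z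
      rw [div_div, mul_comm]
    rw [h1, hφψ z hz0]
    field_simp
  refine ⟨ψ, r, fun i => θ lam * ∏ j ∈ Finset.range i, (-1 - (j:ℂ)), hr, ?_, fun i => hgan i 0 (Metric.mem_ball_self hr), ?_⟩
  · intro i
    refine mul_ne_zero hθlam (Finset.prod_ne_zero_iff.mpr fun j _ => ?_)
    intro hj
    have : ((j:ℂ)) + 1 = 0 := by linear_combination -hj
    exact Nat.cast_add_one_ne_zero j this
  · intro i
    induction i with
    | zero =>
      intro z hz hz0
      rw [eFun, iteratedDeriv_zero, hrepr z hz hz0]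
      simp [zpow_neg_one]
    | succ i ih =>
      intro z hz hz0
      rw [eFun, iteratedDeriv_succ]
      have hev : iteratedDeriv i (fun w => θ (lam + w) / θ w) =ᶠ[nhds z]
          fun w => (θ lam * ∏ j ∈ Finset.range i, (-1 - (j:ℂ))) * w ^ (-1 - (i:ℤ))
            + iteratedDeriv i ψ w := by
        have hopen : IsOpen (Metric.ball (0:ℂ) r \ {0}) :=
          Metric.isOpen_ball.sdiff isClosed_singleton
        filter_upwards [hopen.mem_nhds ⟨hz, hz0⟩] with w hw using ih w hw.1 hw.2
      rw [hev.deriv_eq]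
      have hd1 : DifferentiableAt ℂ (fun w : ℂ => w ^ (-1 - (i:ℤ))) z :=
        differentiableAt_zpow.mpr (Or.inl hz0)
      have hd2 : DifferentiableAt ℂ (iteratedDeriv i ψ) z :=
        ((hgan i) z hz).differentiableAt
      rw [deriv_fun_add (hd1.const_mul _) hd2, deriv_const_mul _ hd1, deriv_zpow,
        ← iteratedDeriv_succ]
      have hexp : (-1 - (i:ℤ)) - 1 = -1 - ((i+1:ℕ):ℤ) := by push_cast; ring
      congr 1
      beta_reduce
      rw [Finset.prod_range_succ, hexp]
      push_cast
      ring

private noncomputable def coeffL (n : ℤ) : LaurentSeries ℂ →ₗ[ℂ] ℂ where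
  toFun G := G.coeff n
  map_add' a b := by simp
  map_smul' c G := by simp

open Complex in
theorem laurent_decomposition_eFun (τ : ℂ) (hτ : 0 < τ.im) (θ : ℂ → ℂ)
    (hθ_entire : Differentiable ℂ θ)
    (hθ_deriv : deriv θ 0 = 1)
    (hθ_zero : ∀ z : ℂ, θ z = 0 ↔ z ∈ lattice τ)
    (hθ_per1 : ∀ z : ℂ, θ (z + 1) = - θ z)
    (hθ_perτ : ∀ z : ℂ, θ (z + τ) =
      - Complex.exp (-(Real.pi : ℂ) * Complex.I * τ) *
        Complex.exp (-2 * (Real.pi : ℂ) * Complex.I * z) * θ z)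
    (lam : ℂ) (hlam : lam ∉ lattice τ)
    (F : ℕ → LaurentSeries ℂ)
    (hF : ∀ i : ℕ, IsLaurentExpansionAt (F i) (eFun θ lam i)) :
    IsCompl powerSeriesSubspace (Submodule.span ℂ (Set.range F)) := by
  obtain ⟨ψ, r, C, hr, hC, hg0, hdecomp⟩ := eFun_decomp τ θ hθ_entire hθ_deriv hθ_zero lam hlam
  have key : ∀ i : ℕ, (F i).coeff (-1 - (i:ℤ)) ≠ 0 ∧
      ∀ n : ℤ, n < -1 - (i:ℤ) → (F i).coeff n = 0 := by
    intro i
    obtain ⟨h1, h2⟩ := coeff_lemma (eFun θ lam i) (F i) (hF i) (iteratedDeriv i ψ) (hg0 i)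
      (C i) (-1 - (i:ℤ)) (by omega) r hr (fun z hz hz0 => hdecomp i z hz hz0)
    exact ⟨h1 ▸ hC i, h2⟩
  constructor
  · -- disjoint
    rw [Submodule.disjoint_def]
    intro x hxP hxS
    obtain ⟨c, rfl⟩ := Finsupp.mem_span_range_iff_exists_finsupp.mp hxS
    have hc0 : c = 0 := by
      by_contra hc
      have hne : c.support.Nonempty := Finsupp.support_nonempty_iff.mpr hc
      set i := c.support.max' hne with hidef
      have hmem := c.support.max'_mem hne
      have hx := hxP (-1 - (i:ℤ)) (by omega)
      have hco : (c.sum fun j a => a • F j).coeff (-1 - (i:ℤ))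
          = c.sum fun j a => a * (F j).coeff (-1 - (i:ℤ)) := by
        have := map_finsuppSum (coeffL (-1 - (i:ℤ))) c (fun j a => a • F j)
        simpa [coeffL, smul_eq_mul] using this
      rw [hco, Finsupp.sum, Finset.sum_eq_single_of_mem i hmem] at hx
      · have hci : c i = 0 :=
          (mul_eq_zero.mp hx).resolve_right (key i).1
        exact (Finsupp.mem_support_iff.mp hmem) hci
      · intro j hj hji
        have hjle : j ≤ i := Finset.le_max' _ j hj
        have hjlt : j < i := lt_of_le_of_ne hjle hji
        rw [(key j).2 (-1 - (i:ℤ)) (by omega), mul_zero]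
    rw [hc0, Finsupp.sum_zero_index]
  · -- codisjoint
    rw [codisjoint_iff, eq_top_iff]
    have main : ∀ (k : ℕ) (G : LaurentSeries ℂ), (∀ n : ℤ, n < -(k:ℤ) → G.coeff n = 0) →
        G ∈ powerSeriesSubspace ⊔ Submodule.span ℂ (Set.range F) := by
      intro k
      induction k with
      | zero =>
        intro G hG
        exact Submodule.mem_sup_left (fun n hn => hG n (by exact_mod_cast hn))
      | succ k ih =>
        intro G hG
        set c := G.coeff (-1 - (k:ℤ)) / (F k).coeff (-1 - (k:ℤ)) with hcdef
        have h1 : G - c • F k ∈ powerSeriesSubspace ⊔ Submodule.span ℂ (Set.range F) := by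
          refine ih _ ?_
          intro n hn
          rw [HahnSeries.coeff_sub, HahnSeries.coeff_smul]
          rcases lt_or_eq_of_le (show n ≤ -1 - (k:ℤ) by omega) with h | h
          · rw [hG n (by omega), (key k).2 n h, smul_zero, sub_zero]
          · rw [h, smul_eq_mul, hcdef, div_mul_cancel₀ _ (key k).1, sub_self]
        have h2 : c • F k ∈ powerSeriesSubspace ⊔ Submodule.span ℂ (Set.range F) :=
          Submodule.mem_sup_right (Submodule.smul_mem _ _ (Submodule.subset_span ⟨k, rfl⟩))
        have := add_mem h1 h2
        rwa [sub_add_cancel] at this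
    intro x _
    refine main ((-x.order).toNat) x fun n hn => ?_
    refine HahnSeries.coeff_eq_zero_of_lt_order ?_
    have := Int.self_le_toNat (-x.order)
    omega
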